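/- Let X be a sequentially complete Hausdorff locally convex space, (T(t))_{t≥0} a strongly continuous locally equicontinuous semigroup on X with generator (A, D(A)), U a Hausdorff locally convex space and B ∈ L(U;X). If (T(t))_{t≥0} satisfies C-maximal regularity for (B,r) for some r > 0, then it satisfies C-maximal regularity for (B,r) for all r > 0. -/

import Mathlib

open Filter Topology Set Classical
open scoped ENNReal

/-- A partition `a = d₀ < d₁ < ⋯ < dₙ = b` of the interval `[a,b]`. -/
structure IntervalPartition (a b : ℝ) where
  n : ℕ
  points : ℕ → ℝ
  first_eq : points 0 = a
  last_eq : points n = b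
  increasing : ∀ i, i < n → points i < points (i + 1)

section Defs

variable {X Y U : Type*}
variable [AddCommGroup X] [Module ℝ X] [UniformSpace X] [IsUniformAddGroup X] [ContinuousSMul ℝ X]
variable [AddCommGroup Y] [Module ℝ Y] [UniformSpace Y] [IsUniformAddGroup Y] [ContinuousSMul ℝ Y]
variable [AddCommGroup U] [Module ℝ U] [UniformSpace U] [IsUniformAddGroup U] [ContinuousSMul ℝ U]

/-- The semivariation `SV_{q,p}(α)` of `α : [a,b] → L(X;Y)` (value in `ℝ≥0∞`). -/
noncomputable def SV (α : ℝ → X →L[ℝ] Y) (q : Seminorm ℝ Y) (p : Seminorm ℝ X)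
    (a b : ℝ) : ℝ≥0∞ :=
  ⨆ (d : IntervalPartition a b) (x : ℕ → X) (_ : ∀ i, i < d.n → p (x i) ≤ 1),
    ENNReal.ofReal
      (q (∑ i ∈ Finset.range d.n,
        (α (d.points (i + 1)) (x i) - α (d.points i) (x i))))

/-- `α : [a,b] → L(X;Y)` is of bounded semivariation. -/
def BoundedSemivariation (α : ℝ → X →L[ℝ] Y) (a b : ℝ) : Prop :=
  ∀ q : Seminorm ℝ Y, Continuous ⇑q →
    ∃ p : Seminorm ℝ X, Continuous ⇑p ∧ SV α q p a b < ⊤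

/-- `y` is the Riemann–Stieltjes integral `∫_a^b f dα`. -/
def IsRSIntegral (α : ℝ → X →L[ℝ] Y) (f : ℝ → X) (a b : ℝ) (y : Y) : Prop :=
  ∀ q : Seminorm ℝ Y, Continuous ⇑q → ∀ ε : ℝ, 0 < ε → ∃ δ : ℝ, 0 < δ ∧
    ∀ (d : IntervalPartition a b) (c : ℕ → ℝ),
      (∀ i, i < d.n → d.points (i + 1) - d.points i < δ) →
      (∀ i, i < d.n → c i ∈ Set.Icc (d.points i) (d.points (i + 1))) →
      q ((∑ i ∈ Finset.range d.n,
        (α (d.points (i + 1)) (f (c i)) - α (d.points i) (f (c i)))) - y) < ε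

/-- The Riemann–Stieltjes integral `∫_a^b f dα` (junk value `0` if it does not exist). -/
noncomputable def RSIntegral (α : ℝ → X →L[ℝ] Y) (f : ℝ → X) (a b : ℝ) : Y :=
  if h : ∃ y, IsRSIntegral α f a b y then h.choose else 0

/-- `y` is the Riemann integral `∫_a^b f(s) ds`. -/
def IsRiemannIntegral (f : ℝ → X) (a b : ℝ) (y : X) : Prop :=
  ∀ q : Seminorm ℝ X, Continuous ⇑q → ∀ ε : ℝ, 0 < ε → ∃ δ : ℝ, 0 < δ ∧
    ∀ (d : IntervalPartition a b) (c : ℕ → ℝ),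
      (∀ i, i < d.n → d.points (i + 1) - d.points i < δ) →
      (∀ i, i < d.n → c i ∈ Set.Icc (d.points i) (d.points (i + 1))) →
      q ((∑ i ∈ Finset.range d.n, (d.points (i + 1) - d.points i) • f (c i)) - y) < ε

/-- The Riemann integral `∫_a^b f(s) ds` (junk value `0` if it does not exist). -/
noncomputable def riemannIntegral (f : ℝ → X) (a b : ℝ) : X :=
  if h : ∃ y, IsRiemannIntegral f a b y then h.choose else 0

/-- Sequential completeness: every Cauchy sequence converges. -/
def SequentiallyComplete (Z : Type*) [UniformSpace Z] : Prop :=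
  ∀ u : ℕ → Z, CauchySeq u → ∃ z, Filter.Tendsto u Filter.atTop (𝓝 z)

/-- A strongly continuous, locally equicontinuous semigroup. -/
def IsSCLESemigroup (T : ℝ → X →L[ℝ] X) : Prop :=
  T 0 = ContinuousLinearMap.id ℝ X ∧
  (∀ s t : ℝ, 0 ≤ s → 0 ≤ t → T (s + t) = (T s).comp (T t)) ∧
  (∀ x : X, ContinuousOn (fun t => T t x) (Set.Ici (0:ℝ))) ∧
  (∀ q : Seminorm ℝ X, Continuous ⇑q → ∀ t₀ : ℝ, 0 ≤ t₀ →
    ∃ p : Seminorm ℝ X, Continuous ⇑p ∧ ∃ C : ℝ, 0 ≤ C ∧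
      ∀ t ∈ Set.Icc (0:ℝ) t₀, ∀ x : X, q (T t x) ≤ C * p x)

/-- A strongly continuous, quasi-equicontinuous semigroup. -/
def IsSCQESemigroup (T : ℝ → X →L[ℝ] X) : Prop :=
  T 0 = ContinuousLinearMap.id ℝ X ∧
  (∀ s t : ℝ, 0 ≤ s → 0 ≤ t → T (s + t) = (T s).comp (T t)) ∧
  (∀ x : X, ContinuousOn (fun t => T t x) (Set.Ici (0:ℝ))) ∧
  (∃ ω : ℝ, ∀ q : Seminorm ℝ X, Continuous ⇑q →
    ∃ p : Seminorm ℝ X, Continuous ⇑p ∧ ∃ C : ℝ, 0 ≤ C ∧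
      ∀ t : ℝ, 0 ≤ t → ∀ x : X, q (Real.exp (-ω * t) • T t x) ≤ C * p x)

/-- The domain of the generator of a semigroup. -/
def genDomain (T : ℝ → X →L[ℝ] X) : Set X :=
  {x | ∃ y : X, Filter.Tendsto (fun t : ℝ => t⁻¹ • (T t x - x)) (𝓝[>] (0:ℝ)) (𝓝 y)}

/-- The generator of a semigroup (junk value `0` outside of its domain). -/
noncomputable def generator (T : ℝ → X →L[ℝ] X) (x : X) : X :=
  if h : ∃ y : X, Filter.Tendsto (fun t : ℝ => t⁻¹ • (T t x - x)) (𝓝[>] (0:ℝ)) (𝓝 y)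
  then h.choose else 0

/-- The convolution `(T∗f)(t) = ∫_0^t T(t-s) f(s) ds`. -/
noncomputable def sgConv (T : ℝ → X →L[ℝ] X) (f : ℝ → X) (t : ℝ) : X :=
  riemannIntegral (fun s => T (t - s) (f s)) 0 t

/-- `v` is the derivative of `u` at `t` within the set `s` (limit of difference quotients). -/
def HasDerivWithinSetLC (u : ℝ → X) (v : X) (s : Set ℝ) (t : ℝ) : Prop :=
  Filter.Tendsto (fun h : ℝ => h⁻¹ • (u (t + h) - u t))
    (𝓝[{h : ℝ | h ≠ 0 ∧ t + h ∈ s}] (0:ℝ)) (𝓝 v)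

/-- `u` is continuously differentiable on `s` with derivative `u'`. -/
def IsC1On (u u' : ℝ → X) (s : Set ℝ) : Prop :=
  ContinuousOn u s ∧ ContinuousOn u' s ∧ ∀ t ∈ s, HasDerivWithinSetLC u (u' t) s t

/-- `u` is a strict solution of `u' = Au + g` on `[0,r]`, `u(0) = x`. -/
def IsStrictSolution (T : ℝ → X →L[ℝ] X) (g : ℝ → X) (x : X) (r : ℝ) (u : ℝ → X) : Prop :=
  u 0 = x ∧ (∀ t ∈ Set.Icc (0:ℝ) r, u t ∈ genDomain T) ∧
  ∃ u' : ℝ → X, IsC1On u u' (Set.Icc (0:ℝ) r) ∧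
    ∀ t ∈ Set.Icc (0:ℝ) r, u' t = generator T (u t) + g t

/-- `(T(t))` satisfies C-maximal regularity for `(B,r)`. -/
def CMaxReg (T : ℝ → X →L[ℝ] X) (B : U →L[ℝ] X) (r : ℝ) : Prop :=
  ∀ f : ℝ → U, ContinuousOn f (Set.Icc (0:ℝ) r) →
    (∀ t ∈ Set.Icc (0:ℝ) r, sgConv T (fun s => B (f s)) t ∈ genDomain T) ∧
    ContinuousOn (fun t => generator T (sgConv T (fun s => B (f s)) t)) (Set.Icc (0:ℝ) r)

end Defs


section MyDev



namespace IntervalPartition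
variable {a b : ℝ} (d : IntervalPartition a b)

lemma mono {i j : ℕ} (hij : i ≤ j) (hj : j ≤ d.n) : d.points i ≤ d.points j := by
  induction j with
  | zero => simp_all
  | succ k ih =>
    rcases Nat.lt_or_ge i (k+1) with hlt | hge
    · exact le_trans (ih (Nat.lt_succ_iff.mp hlt) (le_trans (Nat.le_succ k) hj))
        (d.increasing k (Nat.lt_of_succ_le hj)).le
    · have : i = k + 1 := le_antisymm hij hge
      simp [this]

lemma a_le (i : ℕ) (hi : i ≤ d.n) : a ≤ d.points i := by
  simpa [d.first_eq] using d.mono (Nat.zero_le i) hi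

lemma le_b (i : ℕ) (hi : i ≤ d.n) : d.points i ≤ b := by
  simpa [d.last_eq] using d.mono hi le_rfl

lemma a_le_b (d : IntervalPartition a b) : a ≤ b := by
  have h := d.le_b 0 (Nat.zero_le _)
  rwa [d.first_eq] at h

lemma lt_of_n_pos (h : 0 < d.n) : a < b := by
  have h1 : d.points 0 < d.points 1 := d.increasing 0 h
  have h2 : d.points 1 ≤ d.points d.n := d.mono h le_rfl
  rw [d.first_eq] at h1; rw [d.last_eq] at h2; linarith

lemma n_eq_zero (h : b ≤ a) : d.n = 0 := by
  by_contra hn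
  exact absurd (d.lt_of_n_pos (Nat.pos_of_ne_zero hn)) (not_lt.mpr h)

/-- The uniform partition of `[a,b]` into `n` pieces. -/
noncomputable def uniform (a b : ℝ) (hab : a < b) (n : ℕ) (hn : 0 < n) : IntervalPartition a b where
  n := n
  points := fun i => a + (min i n : ℕ) * ((b - a) / n)
  first_eq := by simp
  last_eq := by
    field_simp
    rw [min_self]; ring
  increasing := by
    intro i hi
    have h1 : min i n = i := min_eq_left (le_of_lt hi)
    have h2 : min (i+1) n = i + 1 := min_eq_left hi
    have hn' : (0:ℝ) < (n:ℝ) := by exact_mod_cast hn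
    have hd : (0:ℝ) < (b - a) / n := div_pos (by linarith) hn'
    show a + (min i n : ℕ) * ((b - a) / n) < a + (min (i+1) n : ℕ) * ((b - a) / n)
    rw [h1, h2]
    push_cast
    nlinarith

lemma uniform_mesh {a b : ℝ} (hab : a < b) (n : ℕ) (hn : 0 < n) {i : ℕ} (hi : i < n) :
    (uniform a b hab n hn).points (i+1) - (uniform a b hab n hn).points i = (b - a) / n := by
  have h1 : min i n = i := min_eq_left (le_of_lt hi)
  have h2 : min (i+1) n = i + 1 := min_eq_left hi
  simp only [uniform, h1, h2]
  push_cast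
  ring

end IntervalPartition


noncomputable def clamp (u v z : ℝ) : ℝ := min v (max u z)

lemma clamp_diff_eq {u v x y : ℝ} (huv : u ≤ v) (hxy : x ≤ y) :
    clamp u v y - clamp u v x = max 0 (min v y - max u x) := by
  unfold clamp
  simp only [min_def, max_def]
  split_ifs <;> linarith

lemma clamp_of_le {u v z : ℝ} (huv : u ≤ v) (hz : v ≤ z) : clamp u v z = v := by
  unfold clamp; simp only [min_def, max_def]; split_ifs <;> linarith

lemma clamp_of_ge {u v z : ℝ} (huv : u ≤ v) (hz : z ≤ u) : clamp u v z = u := by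
  unfold clamp; simp only [min_def, max_def]; split_ifs <;> linarith



section Core
variable {X : Type*} [AddCommGroup X] [Module ℝ X]

/-- The Riemann sum of `F` for the tagged partition `(d, c)`. -/
noncomputable def riemannSum (F : ℝ → X) {a b : ℝ} (d : IntervalPartition a b) (c : ℕ → ℝ) : X :=
  ∑ i ∈ Finset.range d.n, (d.points (i + 1) - d.points i) • F (c i)

/-- Length of the overlap of the `i`-th interval of `d` and the `j`-th interval of `e`. -/
noncomputable def overlap {a b : ℝ} (d e : IntervalPartition a b) (i j : ℕ) : ℝ :=
  clamp (d.points i) (d.points (i+1)) (e.points (j+1))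
    - clamp (d.points i) (d.points (i+1)) (e.points j)

lemma overlap_eq {a b : ℝ} (d e : IntervalPartition a b) {i j : ℕ} (hi : i < d.n) (hj : j < e.n) :
    overlap d e i j
      = max 0 (min (d.points (i+1)) (e.points (j+1)) - max (d.points i) (e.points j)) :=
  clamp_diff_eq (d.increasing i hi).le (e.increasing j hj).le

lemma overlap_nonneg {a b : ℝ} (d e : IntervalPartition a b) {i j : ℕ} (hi : i < d.n) (hj : j < e.n) :
    0 ≤ overlap d e i j := by
  rw [overlap_eq d e hi hj]; exact le_max_left _ _

lemma overlap_symm {a b : ℝ} (d e : IntervalPartition a b) {i j : ℕ} (hi : i < d.n) (hj : j < e.n) :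
    overlap d e i j = overlap e d j i := by
  rw [overlap_eq d e hi hj, overlap_eq e d hj hi, min_comm (d.points (i+1)), max_comm (d.points i)]

lemma sum_overlap {a b : ℝ} (d e : IntervalPartition a b) {i : ℕ} (hi : i < d.n) :
    ∑ j ∈ Finset.range e.n, overlap d e i j = d.points (i+1) - d.points i := by
  unfold overlap
  rw [Finset.sum_range_sub (f := fun j => clamp (d.points i) (d.points (i+1)) (e.points j))]
  rw [e.last_eq, e.first_eq,
    clamp_of_le (d.increasing i hi).le (d.le_b (i+1) hi),
    clamp_of_ge (d.increasing i hi).le (d.a_le i hi.le)]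

lemma seminorm_sum_le {ι : Type*} (q : Seminorm ℝ X) (s : Finset ι) (f : ι → X) :
    q (∑ i ∈ s, f i) ≤ ∑ i ∈ s, q (f i) := by
  induction s using Finset.cons_induction with
  | empty => simp
  | cons a s ha ih =>
    rw [Finset.sum_cons, Finset.sum_cons]
    exact le_trans (map_add_le_add q _ _) (by linarith)

/-- Key estimate: two fine Riemann sums are close. -/
lemma riemannSum_diff_le (q : Seminorm ℝ X) (F : ℝ → X) {a b : ℝ}
    (d e : IntervalPartition a b) (c c' : ℕ → ℝ)
    (hc : ∀ i, i < d.n → c i ∈ Set.Icc (d.points i) (d.points (i+1)))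
    (hc' : ∀ j, j < e.n → c' j ∈ Set.Icc (e.points j) (e.points (j+1)))
    {δ ε : ℝ} (hε : 0 ≤ ε)
    (hd : ∀ i, i < d.n → d.points (i+1) - d.points i < δ)
    (he : ∀ j, j < e.n → e.points (j+1) - e.points j < δ)
    (hF : ∀ s t : ℝ, s ∈ Set.Icc a b → t ∈ Set.Icc a b → |s - t| ≤ 2*δ →
      q (F s - F t) ≤ ε) :
    q (riemannSum F d c - riemannSum F e c') ≤ (b - a) * ε := by
  have hd1 : riemannSum F d c
      = ∑ i ∈ Finset.range d.n, ∑ j ∈ Finset.range e.n, overlap d e i j • F (c i) := by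
    unfold riemannSum
    refine Finset.sum_congr rfl fun i hi => ?_
    rw [← sum_overlap d e (Finset.mem_range.mp hi), Finset.sum_smul]
  have hd2 : riemannSum F e c'
      = ∑ i ∈ Finset.range d.n, ∑ j ∈ Finset.range e.n, overlap d e i j • F (c' j) := by
    unfold riemannSum
    rw [Finset.sum_comm]
    refine Finset.sum_congr rfl fun j hj => ?_
    rw [← sum_overlap e d (Finset.mem_range.mp hj), Finset.sum_smul]
    exact Finset.sum_congr rfl fun i hi =>
      by rw [overlap_symm d e (Finset.mem_range.mp hi) (Finset.mem_range.mp hj)]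
  rw [hd1, hd2, ← Finset.sum_sub_distrib]
  have step1 : q (∑ i ∈ Finset.range d.n, (∑ j ∈ Finset.range e.n, overlap d e i j • F (c i)
      - ∑ j ∈ Finset.range e.n, overlap d e i j • F (c' j)))
      ≤ ∑ i ∈ Finset.range d.n, ∑ j ∈ Finset.range e.n, overlap d e i j * q (F (c i) - F (c' j)) := by
    refine le_trans (seminorm_sum_le q _ _) (Finset.sum_le_sum fun i hi => ?_)
    rw [← Finset.sum_sub_distrib]
    refine le_trans (seminorm_sum_le q _ _) (Finset.sum_le_sum fun j hj => ?_)
    rw [← smul_sub, map_smul_eq_mul]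
    rw [Real.norm_eq_abs,
      abs_of_nonneg (overlap_nonneg d e (Finset.mem_range.mp hi) (Finset.mem_range.mp hj))]
  refine le_trans step1 ?_
  have term : ∀ i ∈ Finset.range d.n, ∀ j ∈ Finset.range e.n,
      overlap d e i j * q (F (c i) - F (c' j)) ≤ overlap d e i j * ε := by
    intro i hi j hj
    have hi' := Finset.mem_range.mp hi
    have hj' := Finset.mem_range.mp hj
    rcases eq_or_lt_of_le (overlap_nonneg d e hi' hj') with h0 | hpos
    · rw [← h0]; simp
    · refine mul_le_mul_of_nonneg_left ?_ (le_of_lt hpos)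
      -- overlap positive: intervals intersect
      rw [overlap_eq d e hi' hj'] at hpos
      have hlt : max (d.points i) (e.points j) < min (d.points (i+1)) (e.points (j+1)) := by
        by_contra hcon
        push_neg at hcon
        rw [max_eq_left (by linarith)] at hpos
        linarith
      have h1 : e.points j < d.points (i+1) :=
        lt_of_le_of_lt (le_max_right _ _) (lt_of_lt_of_le hlt (min_le_left _ _))
      have h2 : d.points i < e.points (j+1) :=
        lt_of_le_of_lt (le_max_left _ _) (lt_of_lt_of_le hlt (min_le_right _ _))
      have hci := hc i hi'
      have hcj := hc' j hj'
      have hmi := hd i hi'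
      have hmj := he j hj'
      refine hF (c i) (c' j)
        ⟨le_trans (d.a_le i hi'.le) hci.1, le_trans hci.2 (d.le_b (i+1) hi')⟩
        ⟨le_trans (e.a_le j hj'.le) hcj.1, le_trans hcj.2 (e.le_b (j+1) hj')⟩ ?_
      rw [abs_le]
      constructor <;> [skip; skip] <;>
        · rcases hci with ⟨hci1, hci2⟩
          rcases hcj with ⟨hcj1, hcj2⟩
          linarith
  refine le_trans (Finset.sum_le_sum fun i hi => Finset.sum_le_sum fun j hj => term i hi j hj) ?_
  · -- total mass
    have : ∀ i ∈ Finset.range d.n, ∑ j ∈ Finset.range e.n, overlap d e i j * ε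
        = (d.points (i+1) - d.points i) * ε := by
      intro i hi
      rw [← Finset.sum_mul, sum_overlap d e (Finset.mem_range.mp hi)]
    rw [Finset.sum_congr rfl this, ← Finset.sum_mul,
      Finset.sum_range_sub (f := fun i => d.points i), d.last_eq, d.first_eq]

end Core


section Helpers
variable {X : Type*} [AddCommGroup X] [Module ℝ X] [UniformSpace X] [IsUniformAddGroup X]
  [ContinuousSMul ℝ X] [LocallyConvexSpace ℝ X]

lemma exists_seminorm_lt_subset {W : Set X} (hW : W ∈ 𝓝 (0:X)) :
    ∃ q : Seminorm ℝ X, Continuous ⇑q ∧ ∃ r : ℝ, 0 < r ∧ ∀ x : X, q x < r → x ∈ W := by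
  have hp := with_gaugeSeminormFamily (𝕜 := ℝ) (E := X)
  rcases hp.hasBasis.mem_iff.mp hW with ⟨U, hU, hUW⟩
  have hU' := hU
  rcases (SeminormFamily.basisSets_iff _).mp hU with ⟨s, r, hr, rfl⟩
  refine ⟨s.sup (gaugeSeminormFamily ℝ X), ?_, r, hr, ?_⟩
  · exact Seminorm.continuous (r := r) (hp.hasBasis.mem_of_mem hU')
  · intro x hx
    exact hUW (by simpa [Seminorm.mem_ball_zero] using hx)

lemma tendsto_of_forall_seminorm {ι : Type*} {l : Filter ι} {u : ι → X} {y : X}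
    (h : ∀ q : Seminorm ℝ X, Continuous ⇑q → Tendsto (fun i => q (u i - y)) l (𝓝 0)) :
    Tendsto u l (𝓝 y) := by
  have : Tendsto (fun i => u i - y) l (𝓝 0) := by
    rw [tendsto_def]
    intro W hW
    rcases exists_seminorm_lt_subset hW with ⟨q, hqc, r, hr, hsub⟩
    filter_upwards [(h q hqc).eventually_lt_const hr] with i hi
    exact hsub _ hi
  have := this.add (tendsto_const_nhds (x := y))
  simpa using this

lemma cauchySeq_of_forall_seminorm {u : ℕ → X}
    (h : ∀ q : Seminorm ℝ X, Continuous ⇑q → ∀ ε : ℝ, 0 < ε →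
      ∃ N, ∀ m ≥ N, ∀ n ≥ N, q (u m - u n) < ε) : CauchySeq u := by
  rw [cauchySeq_iff]
  intro V hV
  rw [uniformity_eq_comap_nhds_zero X, Filter.mem_comap] at hV
  rcases hV with ⟨W, hW, hWV⟩
  rcases exists_seminorm_lt_subset hW with ⟨q, hqc, r, hr, hsub⟩
  rcases h q hqc r hr with ⟨N, hN⟩
  exact ⟨N, fun k hk l hl => hWV (mem_preimage.mpr (hsub _ (hN l hl k hk)))⟩


variable [T2Space X]

lemma eq_zero_of_forall_seminorm {y : X}
    (h : ∀ q : Seminorm ℝ X, Continuous ⇑q → q y = 0) : y = 0 := by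
  by_contra hy
  have hW : ({y}ᶜ : Set X) ∈ 𝓝 (0:X) :=
    (isOpen_compl_singleton).mem_nhds (by simpa using (Ne.symm hy))
  rcases exists_seminorm_lt_subset hW with ⟨q, hqc, r, hr, hsub⟩
  exact hsub y (by rw [h q hqc]; exact hr) rfl

end Helpers

section Integration
variable {X : Type*} [AddCommGroup X] [Module ℝ X] [UniformSpace X] [IsUniformAddGroup X]
  [ContinuousSMul ℝ X]

/-- Uniform continuity of a continuous function on a compact interval, seminorm version. -/
lemma exists_uniform_delta {F : ℝ → X} {a b : ℝ} (hF : ContinuousOn F (Set.Icc a b))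
    (q : Seminorm ℝ X) (hq : Continuous ⇑q) {ε : ℝ} (hε : 0 < ε) :
    ∃ δ : ℝ, 0 < δ ∧ ∀ s t : ℝ, s ∈ Set.Icc a b → t ∈ Set.Icc a b → |s - t| ≤ δ →
      q (F s - F t) ≤ ε := by
  set K : Set (ℝ × ℝ) := (Set.Icc a b) ×ˢ (Set.Icc a b) with hK
  have hKc : IsCompact K := isCompact_Icc.prod isCompact_Icc
  have hKcl : IsClosed K := isClosed_Icc.prod isClosed_Icc
  set G : ℝ × ℝ → ℝ := fun p => q (F p.1 - F p.2) with hG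
  have hGc : ContinuousOn G K := by
    apply hq.comp_continuousOn
    exact (hF.comp continuousOn_fst fun p hp => hp.1).sub
      (hF.comp continuousOn_snd fun p hp => hp.2)
  set S : Set (ℝ × ℝ) := K ∩ G ⁻¹' (Set.Ici ε) with hS
  have hScl : IsClosed S := hGc.preimage_isClosed_of_isClosed hKcl isClosed_Ici
  have hScpt : IsCompact S := hKc.of_isClosed_subset hScl Set.inter_subset_left
  rcases Set.eq_empty_or_nonempty S with hSe | hSne
  · refine ⟨1, one_pos, fun s t hs ht _ => ?_⟩
    by_contra hcon
    have : (s, t) ∈ S := ⟨Set.mk_mem_prod hs ht, le_of_lt (not_le.mp hcon)⟩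
    rw [hSe] at this; exact this
  · obtain ⟨p₀, hp₀, hmin⟩ := hScpt.exists_isMinOn hSne
      ((continuous_fst.sub continuous_snd).abs.continuousOn)
    set m : ℝ := |p₀.1 - p₀.2| with hm
    have hm0 : 0 < m := by
      rcases lt_or_eq_of_le (abs_nonneg (p₀.1 - p₀.2)) with h | h
      · exact h
      · exfalso
        have heq : p₀.1 = p₀.2 := by
          have := abs_eq_zero.mp h.symm; linarith [this]
        have := hp₀.2
        simp only [Set.mem_preimage, Set.mem_Ici, hG, heq, sub_self, map_zero] at this
        linarith
    refine ⟨m/2, by linarith, fun s t hs ht hst => ?_⟩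
    by_contra hcon
    have hmem : (s, t) ∈ S := ⟨Set.mk_mem_prod hs ht, le_of_lt (not_le.mp hcon)⟩
    have := hmin hmem
    simp only [hm] at this
    have : m ≤ |s - t| := this
    linarith

lemma exists_fine_partition {a b : ℝ} (hab : a ≤ b) {δ : ℝ} (hδ : 0 < δ) :
    ∃ (d : IntervalPartition a b) (c : ℕ → ℝ),
      (∀ i, i < d.n → d.points (i+1) - d.points i < δ) ∧
      (∀ i, i < d.n → c i ∈ Set.Icc (d.points i) (d.points (i+1))) := by
  rcases eq_or_lt_of_le hab with heq | hlt
  · exact ⟨⟨0, fun _ => a, rfl, heq ▸ rfl, fun i hi => absurd hi (Nat.not_lt_zero i)⟩,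
      fun _ => a, fun i hi => absurd hi (Nat.not_lt_zero i),
      fun i hi => absurd hi (Nat.not_lt_zero i)⟩
  · obtain ⟨n, hn⟩ := exists_nat_gt ((b - a)/δ)
    have hn0 : 0 < n := by
      by_contra h
      push_neg at h
      interval_cases n
      · simp at hn
        nlinarith [div_pos (by linarith : (0:ℝ) < b - a) hδ]
    have hnR : (0:ℝ) < (n:ℝ) := by exact_mod_cast hn0
    refine ⟨IntervalPartition.uniform a b hlt n hn0, (IntervalPartition.uniform a b hlt n hn0).points,
      fun i hi => ?_, fun i hi => ⟨le_rfl, ((IntervalPartition.uniform a b hlt n hn0).increasing i hi).le⟩⟩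
    rw [IntervalPartition.uniform_mesh hlt n hn0 hi]
    rw [div_lt_iff₀ hnR]
    rw [div_lt_iff₀ hδ] at hn
    linarith

variable [LocallyConvexSpace ℝ X] [T2Space X]

lemma IsRiemannIntegral.unique {F : ℝ → X} {a b : ℝ} {y y' : X} (hab : a ≤ b)
    (h1 : IsRiemannIntegral F a b y) (h2 : IsRiemannIntegral F a b y') : y = y' := by
  rw [← sub_eq_zero]
  apply eq_zero_of_forall_seminorm
  intro q hq
  refine le_antisymm ?_ (apply_nonneg q _)
  by_contra hcon
  push_neg at hcon
  set ε := q (y - y') / 2 with hε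
  have hε0 : 0 < ε := by positivity
  obtain ⟨δ1, hδ1, H1⟩ := h1 q hq ε hε0
  obtain ⟨δ2, hδ2, H2⟩ := h2 q hq ε hε0
  obtain ⟨d, c, hfine, htags⟩ := exists_fine_partition hab (lt_min hδ1 hδ2)
  have e1 := H1 d c (fun i hi => lt_of_lt_of_le (hfine i hi) (min_le_left _ _)) htags
  have e2 := H2 d c (fun i hi => lt_of_lt_of_le (hfine i hi) (min_le_right _ _)) htags
  have : q (y - y') < ε + ε := by
    have tri : q (y - y') ≤ q (riemannSum F d c - y) + q (riemannSum F d c - y') := by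
      have : y - y' = -(riemannSum F d c - y) + (riemannSum F d c - y') := by abel
      rw [this]
      exact le_trans (map_add_le_add q _ _) (by rw [map_neg_eq_map])
    have e1' : q (riemannSum F d c - y) < ε := e1
    have e2' : q (riemannSum F d c - y') < ε := e2
    linarith
  rw [hε] at this
  linarith

lemma isRiemannIntegral_refl {F : ℝ → X} {a : ℝ} : IsRiemannIntegral F a a (0 : X) := by
  intro q hq ε hε
  refine ⟨1, one_pos, fun d c _ _ => ?_⟩
  have hn : d.n = 0 := d.n_eq_zero le_rfl
  simp [hn, hε]

lemma isRiemannIntegral_exists {F : ℝ → X} {a b : ℝ} (hab : a ≤ b)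
    (hF : ContinuousOn F (Set.Icc a b)) (hX : SequentiallyComplete X) :
    ∃ y : X, IsRiemannIntegral F a b y := by
  rcases eq_or_lt_of_le hab with heq | hlt
  · subst heq; exact ⟨0, isRiemannIntegral_refl⟩
  -- uniform partitions
  set P : ℕ → IntervalPartition a b := fun k => IntervalPartition.uniform a b hlt (k+1) (Nat.succ_pos k) with hP
  set u : ℕ → X := fun k => riemannSum F (P k) (P k).points with hu
  have htags : ∀ k, ∀ i, i < (P k).n → (P k).points i ∈ Set.Icc ((P k).points i) ((P k).points (i+1)) :=
    fun k i hi => ⟨le_rfl, ((P k).increasing i hi).le⟩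
  have hmesh : ∀ k i, i < (P k).n → (P k).points (i+1) - (P k).points i = (b - a)/(k+1) := by
    intro k i hi
    have h := IntervalPartition.uniform_mesh hlt (k+1) (Nat.succ_pos k) hi
    rw [h]
    push_cast
    ring
  have hmesh_lt : ∀ {δ : ℝ}, 0 < δ → ∃ N : ℕ, ∀ k ≥ N, ∀ i, i < (P k).n →
      (P k).points (i+1) - (P k).points i < δ := by
    intro δ hδ
    obtain ⟨N, hN⟩ := exists_nat_gt ((b - a)/δ)
    refine ⟨N, fun k hk i hi => ?_⟩
    rw [hmesh k i hi]
    have hk1 : (0:ℝ) < (k:ℝ)+1 := by positivity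
    rw [div_lt_iff₀ hk1]
    rw [div_lt_iff₀ hδ] at hN
    have : (N:ℝ) ≤ (k:ℝ) := by exact_mod_cast hk
    nlinarith
  have hcauchy : CauchySeq u := by
    apply cauchySeq_of_forall_seminorm
    intro q hq ε hε
    set ε' : ℝ := ε / (2*(b - a) + 1) with hε'
    have hε'0 : 0 < ε' := by
      have : 0 < 2*(b-a)+1 := by linarith
      positivity
    obtain ⟨δ₀, hδ₀, hFδ⟩ := exists_uniform_delta hF q hq hε'0
    obtain ⟨N, hN⟩ := hmesh_lt (by linarith : 0 < δ₀/2)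
    refine ⟨N, fun m hm n hn => ?_⟩
    have key := riemannSum_diff_le q F (P m) (P n) (P m).points (P n).points
      (htags m) (htags n) hε'0.le (hN m hm) (hN n hn)
      (fun s t hs ht hst => hFδ s t hs ht (by linarith))
    have : (b - a) * ε' < ε := by
      have h1 : 0 < 2*(b-a)+1 := by linarith
      rw [hε', ← mul_div_assoc, div_lt_iff₀ h1]
      nlinarith
    calc q (u m - u n) ≤ (b - a) * ε' := key
      _ < ε := this
  obtain ⟨y, hy⟩ := hX u hcauchy
  refine ⟨y, ?_⟩
  intro q hq ε hε
  set ε' : ℝ := ε / (2*(2*(b - a) + 1)) with hε'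
  have hε'0 : 0 < ε' := by
    have : 0 < 2*(2*(b-a)+1) := by linarith
    positivity
  obtain ⟨δ₀, hδ₀, hFδ⟩ := exists_uniform_delta hF q hq hε'0
  refine ⟨δ₀/2, by linarith, fun d c hdfine hdtags => ?_⟩
  -- pick k with fine mesh and u k close to y
  have hq0 : Tendsto (fun k => q (u k - y)) atTop (𝓝 0) := by
    have h1 : Tendsto (fun k => u k - y) atTop (𝓝 0) := by
      simpa using hy.sub (tendsto_const_nhds (x := y))
    have := (hq.tendsto 0).comp h1
    simpa [Function.comp_def] using this
  obtain ⟨N₁, hN₁⟩ := hmesh_lt (by linarith : 0 < δ₀/2)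
  obtain ⟨N₂, hN₂⟩ := (Metric.tendsto_atTop.mp hq0) (ε/2) (by linarith)
  set k := max N₁ N₂ with hk
  have hk1 := hN₁ k (le_max_left _ _)
  have hk2 := hN₂ k (le_max_right _ _)
  have key := riemannSum_diff_le q F d (P k) c (P k).points
    hdtags (htags k) hε'0.le hdfine hk1
    (fun s t hs ht hst => hFδ s t hs ht (by linarith))
  have hquk : q (u k - y) < ε/2 := by
    have := hk2
    rw [Real.dist_eq] at this
    calc q (u k - y) ≤ |q (u k - y) - 0| := by rw [sub_zero]; exact le_abs_self _
      _ < ε/2 := this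
  have tri : q (riemannSum F d c - y) ≤ q (riemannSum F d c - u k) + q (u k - y) := by
    have : riemannSum F d c - y = (riemannSum F d c - u k) + (u k - y) := by abel
    rw [this]
    exact map_add_le_add q _ _
  have hba : (b - a) * ε' < ε/2 := by
    have h1 : 0 < 2*(2*(b-a)+1) := by linarith
    rw [hε', ← mul_div_assoc, div_lt_div_iff₀ h1 (by linarith : (0:ℝ) < 2)]
    nlinarith
  calc q (riemannSum F d c - y) ≤ q (riemannSum F d c - u k) + q (u k - y) := tri
    _ ≤ (b-a) * ε' + q (u k - y) := by linarith [key]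
    _ < ε/2 + ε/2 := by linarith
    _ = ε := by ring

lemma riemannIntegral_eq {F : ℝ → X} {a b : ℝ} {y : X} (hab : a ≤ b)
    (h : IsRiemannIntegral F a b y) : riemannIntegral F a b = y := by
  unfold riemannIntegral
  rw [dif_pos ⟨y, h⟩]
  exact IsRiemannIntegral.unique hab (⟨y, h⟩ : ∃ y, IsRiemannIntegral F a b y).choose_spec h

end Integration

section Integration2
variable {X : Type*} [AddCommGroup X] [Module ℝ X] [UniformSpace X] [IsUniformAddGroup X]
  [ContinuousSMul ℝ X]

lemma isRiemannIntegral_congr {F G : ℝ → X} {a b : ℝ} {y : X}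
    (hFG : ∀ s ∈ Set.Icc a b, F s = G s) (h : IsRiemannIntegral F a b y) :
    IsRiemannIntegral G a b y := by
  intro q hq ε hε
  obtain ⟨δ, hδ, H⟩ := h q hq ε hε
  refine ⟨δ, hδ, fun d c hf ht => ?_⟩
  have hsum : ∑ i ∈ Finset.range d.n, (d.points (i + 1) - d.points i) • G (c i)
      = ∑ i ∈ Finset.range d.n, (d.points (i + 1) - d.points i) • F (c i) := by
    refine Finset.sum_congr rfl fun i hi => ?_
    have hi' := Finset.mem_range.mp hi
    have hci := ht i hi'
    rw [hFG (c i) ⟨le_trans (d.a_le i hi'.le) hci.1, le_trans hci.2 (d.le_b (i+1) hi')⟩]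
  rw [hsum]
  exact H d c hf ht

variable {Y : Type*} [AddCommGroup Y] [Module ℝ Y] [UniformSpace Y] [IsUniformAddGroup Y]
  [ContinuousSMul ℝ Y]

lemma IsRiemannIntegral.clm_comp {F : ℝ → X} {a b : ℝ} {y : X} (L : X →L[ℝ] Y)
    (h : IsRiemannIntegral F a b y) : IsRiemannIntegral (fun s => L (F s)) a b (L y) := by
  intro q hq ε hε
  have hqL : Continuous ⇑(q.comp (L : X →ₗ[ℝ] Y)) := by
    have : ⇑(q.comp (L : X →ₗ[ℝ] Y)) = ⇑q ∘ ⇑L := rfl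
    rw [this]
    exact hq.comp L.continuous
  obtain ⟨δ, hδ, H⟩ := h (q.comp (L : X →ₗ[ℝ] Y)) hqL ε hε
  refine ⟨δ, hδ, fun d c hf ht => ?_⟩
  have key : (∑ i ∈ Finset.range d.n, (d.points (i + 1) - d.points i) • L (F (c i))) - L y
      = L ((∑ i ∈ Finset.range d.n, (d.points (i + 1) - d.points i) • F (c i)) - y) := by
    rw [map_sub, map_sum]
    simp only [map_smul]
  rw [key]
  exact H d c hf ht

lemma IsRiemannIntegral.translate {F : ℝ → X} {a b r : ℝ} {y : X}
    (h : IsRiemannIntegral (fun s => F (s + r)) a b y) :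
    IsRiemannIntegral F (a + r) (b + r) y := by
  intro q hq ε hε
  obtain ⟨δ, hδ, H⟩ := h q hq ε hε
  refine ⟨δ, hδ, fun d c hf ht => ?_⟩
  set d' : IntervalPartition a b := ⟨d.n, fun i => d.points i - r,
    by show d.points 0 - r = a; rw [d.first_eq]; ring,
    by show d.points d.n - r = b; rw [d.last_eq]; ring,
    fun i hi => by have := d.increasing i hi; show d.points i - r < d.points (i+1) - r; linarith⟩ with hd'
  have hfine' : ∀ i, i < d'.n → d'.points (i+1) - d'.points i < δ := by
    intro i hi
    have := hf i hi
    show d.points (i+1) - r - (d.points i - r) < δ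
    linarith
  have htags' : ∀ i, i < d'.n → c i - r ∈ Set.Icc (d'.points i) (d'.points (i+1)) := by
    intro i hi
    have := ht i hi
    constructor
    · show d.points i - r ≤ c i - r
      linarith [this.1]
    · show c i - r ≤ d.points (i+1) - r
      linarith [this.2]
  have := H d' (fun i => c i - r) hfine' htags'
  have hsum : ∑ i ∈ Finset.range d'.n, (d'.points (i + 1) - d'.points i) • F ((c i - r) + r)
      = ∑ i ∈ Finset.range d.n, (d.points (i + 1) - d.points i) • F (c i) := by
    refine Finset.sum_congr rfl fun i hi => ?_
    have h1 : d'.points (i+1) - d'.points i = d.points (i+1) - d.points i := by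
      show d.points (i+1) - r - (d.points i - r) = _
      ring
    rw [h1, sub_add_cancel]
  rw [← hsum]
  exact this

/-- Concatenation of partitions. -/
noncomputable def IntervalPartition.concat {a c b : ℝ} (d₁ : IntervalPartition a c) (d₂ : IntervalPartition c b)
    (h2 : 0 < d₂.n) : IntervalPartition a b where
  n := d₁.n + d₂.n
  points := fun i => if i ≤ d₁.n then d₁.points i else d₂.points (i - d₁.n)
  first_eq := by simp [d₁.first_eq]
  last_eq := by
    show (if d₁.n + d₂.n ≤ d₁.n then d₁.points (d₁.n + d₂.n) else d₂.points (d₁.n + d₂.n - d₁.n)) = b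
    rw [if_neg (by omega)]
    have e : d₁.n + d₂.n - d₁.n = d₂.n := by omega
    rw [e, d₂.last_eq]
  increasing := by
    intro i hi
    show (if i ≤ d₁.n then d₁.points i else d₂.points (i - d₁.n))
      < (if i + 1 ≤ d₁.n then d₁.points (i+1) else d₂.points (i + 1 - d₁.n))
    rcases lt_trichotomy i d₁.n with h | h | h
    · rcases Nat.lt_or_ge (i+1) (d₁.n + 1) with h' | h'
      · rw [if_pos (by omega), if_pos (by omega)]
        exact d₁.increasing i h
      · omega
    · rw [if_pos (by omega), if_neg (by omega)]
      have e : i + 1 - d₁.n = 1 := by omega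
      have e2 : d₁.points i = c := by rw [h, d₁.last_eq]
      rw [e, e2]
      have h3 := d₂.increasing 0 h2
      rwa [d₂.first_eq] at h3
    · rw [if_neg (by omega), if_neg (by omega)]
      have e : i + 1 - d₁.n = (i - d₁.n) + 1 := by omega
      rw [e]
      exact d₂.increasing (i - d₁.n) (by omega)

lemma IntervalPartition.concat_points_left {a c b : ℝ} (d₁ : IntervalPartition a c) (d₂ : IntervalPartition c b)
    (h2 : 0 < d₂.n) {i : ℕ} (hi : i ≤ d₁.n) :
    (d₁.concat d₂ h2).points i = d₁.points i := if_pos hi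

lemma IntervalPartition.concat_points_right {a c b : ℝ} (d₁ : IntervalPartition a c) (d₂ : IntervalPartition c b)
    (h2 : 0 < d₂.n) {i : ℕ} (hi : d₁.n ≤ i) :
    (d₁.concat d₂ h2).points i = d₂.points (i - d₁.n) := by
  rcases eq_or_lt_of_le hi with h | h
  · show (if i ≤ d₁.n then d₁.points i else d₂.points (i - d₁.n)) = _
    rw [if_pos h.ge, ← h, Nat.sub_self, d₂.first_eq, d₁.last_eq]
  · exact if_neg (by omega)

end Integration2

section Integration3
variable {X : Type*} [AddCommGroup X] [Module ℝ X] [UniformSpace X] [IsUniformAddGroup X]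
  [ContinuousSMul ℝ X] [LocallyConvexSpace ℝ X] [T2Space X]

lemma IntervalPartition.n_pos {a b : ℝ} (d : IntervalPartition a b) (hab : a < b) : 0 < d.n := by
  by_contra h
  push_neg at h
  have h0 : d.n = 0 := Nat.le_zero.mp h
  have := d.last_eq
  rw [h0, d.first_eq] at this
  linarith

lemma isRiemannIntegral_concat_eq {F : ℝ → X} {a c b : ℝ} (hac : a < c) (hcb : c < b)
    {y₁ y₂ y₃ : X} (h1 : IsRiemannIntegral F a c y₁) (h2 : IsRiemannIntegral F c b y₂)
    (h3 : IsRiemannIntegral F a b y₃) : y₃ = y₁ + y₂ := by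
  rw [← sub_eq_zero]
  apply eq_zero_of_forall_seminorm
  intro q hq
  refine le_antisymm ?_ (apply_nonneg q _)
  by_contra hcon
  push_neg at hcon
  set ε : ℝ := q (y₃ - (y₁ + y₂)) / 4 with hε
  have hε0 : 0 < ε := by positivity
  obtain ⟨δ₁, hδ₁, H1⟩ := h1 q hq ε hε0
  obtain ⟨δ₂, hδ₂, H2⟩ := h2 q hq ε hε0
  obtain ⟨δ₃, hδ₃, H3⟩ := h3 q hq ε hε0
  set δ : ℝ := min δ₁ (min δ₂ δ₃) with hδdef
  have hδ0 : 0 < δ := lt_min hδ₁ (lt_min hδ₂ hδ₃)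
  obtain ⟨d₁, c₁, hf₁, ht₁⟩ := exists_fine_partition hac.le hδ0
  obtain ⟨d₂, c₂, hf₂, ht₂⟩ := exists_fine_partition hcb.le hδ0
  have h2n : 0 < d₂.n := d₂.n_pos hcb
  set D : IntervalPartition a b := d₁.concat d₂ h2n with hD
  set ctag : ℕ → ℝ := fun i => if i < d₁.n then c₁ i else c₂ (i - d₁.n) with hctag
  have hDn : D.n = d₁.n + d₂.n := rfl
  have hDfine : ∀ i, i < D.n → D.points (i+1) - D.points i < δ := by
    intro i hi
    rcases Nat.lt_or_ge i d₁.n with h | h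
    · rw [IntervalPartition.concat_points_left d₁ d₂ h2n (by omega : i + 1 ≤ d₁.n),
        IntervalPartition.concat_points_left d₁ d₂ h2n (by omega : i ≤ d₁.n)]
      exact hf₁ i h
    · rw [IntervalPartition.concat_points_right d₁ d₂ h2n (by omega : d₁.n ≤ i + 1),
        IntervalPartition.concat_points_right d₁ d₂ h2n h]
      have e : i + 1 - d₁.n = (i - d₁.n) + 1 := by omega
      rw [e]
      exact hf₂ (i - d₁.n) (by rw [hDn] at hi; omega)
  have hDtags : ∀ i, i < D.n → ctag i ∈ Set.Icc (D.points i) (D.points (i+1)) := by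
    intro i hi
    rcases Nat.lt_or_ge i d₁.n with h | h
    · rw [IntervalPartition.concat_points_left d₁ d₂ h2n (by omega : i + 1 ≤ d₁.n),
        IntervalPartition.concat_points_left d₁ d₂ h2n (by omega : i ≤ d₁.n)]
      have : ctag i = c₁ i := if_pos h
      rw [this]
      exact ht₁ i h
    · rw [IntervalPartition.concat_points_right d₁ d₂ h2n (by omega : d₁.n ≤ i + 1),
        IntervalPartition.concat_points_right d₁ d₂ h2n h]
      have e : i + 1 - d₁.n = (i - d₁.n) + 1 := by omega
      have : ctag i = c₂ (i - d₁.n) := if_neg (by omega)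
      rw [e, this]
      exact ht₂ (i - d₁.n) (by rw [hDn] at hi; omega)
  have hsplit : riemannSum F D ctag = riemannSum F d₁ c₁ + riemannSum F d₂ c₂ := by
    unfold riemannSum
    rw [hDn, Finset.sum_range_add]
    congr 1
    · refine Finset.sum_congr rfl fun i hi => ?_
      have hi' := Finset.mem_range.mp hi
      have e0 : ctag i = c₁ i := if_pos hi'
      rw [IntervalPartition.concat_points_left d₁ d₂ h2n (by omega : i + 1 ≤ d₁.n),
        IntervalPartition.concat_points_left d₁ d₂ h2n (by omega : i ≤ d₁.n), e0]
    · refine Finset.sum_congr rfl fun i hi => ?_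
      have hi' := Finset.mem_range.mp hi
      rw [IntervalPartition.concat_points_right d₁ d₂ h2n (by omega : d₁.n ≤ d₁.n + i + 1),
        IntervalPartition.concat_points_right d₁ d₂ h2n (by omega : d₁.n ≤ d₁.n + i)]
      have e1 : d₁.n + i + 1 - d₁.n = i + 1 := by omega
      have e2 : d₁.n + i - d₁.n = i := by omega
      have e3 : ctag (d₁.n + i) = c₂ i := by
        show (if d₁.n + i < d₁.n then c₁ (d₁.n + i) else c₂ (d₁.n + i - d₁.n)) = c₂ i
        rw [if_neg (by omega), e2]
      rw [e1, e2, e3]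
  have e1 := H1 d₁ c₁ (fun i hi => lt_of_lt_of_le (hf₁ i hi) (min_le_left _ _)) ht₁
  have e2 := H2 d₂ c₂ (fun i hi => lt_of_lt_of_le (hf₂ i hi)
    (le_trans (min_le_right _ _) (min_le_left _ _))) ht₂
  have e3 := H3 D ctag (fun i hi => lt_of_lt_of_le (hDfine i hi)
    (le_trans (min_le_right _ _) (min_le_right _ _))) hDtags
  have e1' : q (riemannSum F d₁ c₁ - y₁) < ε := e1
  have e2' : q (riemannSum F d₂ c₂ - y₂) < ε := e2
  have e3' : q (riemannSum F D ctag - y₃) < ε := e3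
  have tri : q (y₃ - (y₁ + y₂)) ≤ q (riemannSum F D ctag - y₃)
      + (q (riemannSum F d₁ c₁ - y₁) + q (riemannSum F d₂ c₂ - y₂)) := by
    have hid : y₃ - (y₁ + y₂) = -(riemannSum F D ctag - y₃)
        + ((riemannSum F d₁ c₁ - y₁) + (riemannSum F d₂ c₂ - y₂)) := by
      rw [hsplit]; abel
    rw [hid]
    refine le_trans (map_add_le_add q _ _) ?_
    rw [map_neg_eq_map]
    exact add_le_add le_rfl (map_add_le_add q _ _)
  rw [hε] at e1' e2' e3'
  linarith

end Integration3

section Semigroup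
variable {X : Type*} [AddCommGroup X] [Module ℝ X] [UniformSpace X] [IsUniformAddGroup X]
  [ContinuousSMul ℝ X] [LocallyConvexSpace ℝ X] [T2Space X]
variable {T : ℝ → X →L[ℝ] X}

lemma ContinuousOn.paste {f : ℝ → X} {s t : Set ℝ} (hs : IsClosed s) (ht : IsClosed t)
    (h1 : ContinuousOn f s) (h2 : ContinuousOn f t) : ContinuousOn f (s ∪ t) := by
  intro x hx
  have hcs : ContinuousWithinAt f s x := by
    by_cases h : x ∈ s
    · exact h1 x h
    · exact continuousWithinAt_of_notMem_closure (by rwa [hs.closure_eq])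
  have hct : ContinuousWithinAt f t x := by
    by_cases h : x ∈ t
    · exact h2 x h
    · exact continuousWithinAt_of_notMem_closure (by rwa [ht.closure_eq])
  exact hcs.union hct

lemma generator_spec {x : X} (hx : x ∈ genDomain T) :
    Tendsto (fun t : ℝ => t⁻¹ • (T t x - x)) (𝓝[>] (0:ℝ)) (𝓝 (generator T x)) := by
  have hx' : ∃ y : X, Tendsto (fun t : ℝ => t⁻¹ • (T t x - x)) (𝓝[>] (0:ℝ)) (𝓝 y) := hx
  unfold generator
  rw [dif_pos hx']
  exact hx'.choose_spec

lemma generator_unique {x y : X}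
    (h : Tendsto (fun t : ℝ => t⁻¹ • (T t x - x)) (𝓝[>] (0:ℝ)) (𝓝 y)) :
    generator T x = y :=
  tendsto_nhds_unique (generator_spec ⟨y, h⟩) h

lemma genDomain_add {x y : X} (hx : x ∈ genDomain T) (hy : y ∈ genDomain T) :
    x + y ∈ genDomain T ∧ generator T (x + y) = generator T x + generator T y := by
  have key : (fun t : ℝ => t⁻¹ • (T t (x + y) - (x + y)))
      = fun t : ℝ => t⁻¹ • (T t x - x) + t⁻¹ • (T t y - y) := by
    funext t
    rw [← smul_add]
    congr 1
    rw [map_add]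
    abel
  have htend : Tendsto (fun t : ℝ => t⁻¹ • (T t (x + y) - (x + y))) (𝓝[>] (0:ℝ))
      (𝓝 (generator T x + generator T y)) := by
    rw [key]
    exact (generator_spec hx).add (generator_spec hy)
  exact ⟨⟨_, htend⟩, generator_unique htend⟩

lemma generator_zero : (0:X) ∈ genDomain T ∧ generator T (0:X) = 0 := by
  have htend : Tendsto (fun t : ℝ => t⁻¹ • (T t (0:X) - 0)) (𝓝[>] (0:ℝ)) (𝓝 (0:X)) := by
    have : (fun t : ℝ => t⁻¹ • (T t (0:X) - 0)) = fun _ => (0:X) := by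
      funext t; simp
    rw [this]
    exact tendsto_const_nhds
  exact ⟨⟨_, htend⟩, generator_unique htend⟩

lemma genDomain_T_smulmap (hT : IsSCLESemigroup T) {τ : ℝ} (hτ : 0 ≤ τ) {x : X}
    (hx : x ∈ genDomain T) :
    T τ x ∈ genDomain T ∧ generator T (T τ x) = T τ (generator T x) := by
  obtain ⟨h0, hsg, hcont, heq⟩ := hT
  have key : ∀ᶠ t in (𝓝[>] (0:ℝ)),
      t⁻¹ • (T t (T τ x) - T τ x) = T τ (t⁻¹ • (T t x - x)) := by
    filter_upwards [eventually_mem_nhdsWithin] with t ht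
    have ht0 : (0:ℝ) ≤ t := (Set.mem_Ioi.mp ht).le
    have e1 : T t (T τ x) = T τ (T t x) := by
      have e2 := hsg t τ ht0 hτ
      have e3 := hsg τ t hτ ht0
      calc T t (T τ x) = T (t + τ) x := by rw [e2]; rfl
        _ = T (τ + t) x := by rw [add_comm]
        _ = T τ (T t x) := by rw [e3]; rfl
    rw [map_smul, map_sub, e1]
  have htend : Tendsto (fun t : ℝ => t⁻¹ • (T t (T τ x) - T τ x)) (𝓝[>] (0:ℝ))
      (𝓝 (T τ (generator T x))) := by
    refine Tendsto.congr' (EventuallyEq.symm key) ?_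
    exact ((T τ).continuous.tendsto _).comp (generator_spec hx)
  exact ⟨⟨_, htend⟩, generator_unique htend⟩

/-- Joint continuity of the semigroup convolution integrand. -/
lemma sgConv_integrand_continuousOn (hT : IsSCLESemigroup T) {f : ℝ → X} {R t : ℝ}
    (ht0 : 0 ≤ t) (htR : t ≤ R) (hf : ContinuousOn f (Set.Icc 0 R)) :
    ContinuousOn (fun s => T (t - s) (f s)) (Set.Icc 0 t) := by
  obtain ⟨h0, hsg, hcont, heq⟩ := hT
  intro s₀ hs₀
  have hIccsub : Set.Icc (0:ℝ) t ⊆ Set.Icc 0 R := Set.Icc_subset_Icc le_rfl htR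
  apply tendsto_of_forall_seminorm
  intro q hq
  obtain ⟨p, hpc, C, hC, hCp⟩ := heq q hq t ht0
  -- first piece
  have hfc : ContinuousWithinAt f (Set.Icc 0 t) s₀ := (hf s₀ (hIccsub hs₀)).mono hIccsub
  have hA : Tendsto (fun s => C * p (f s - f s₀)) (𝓝[Set.Icc 0 t] s₀) (𝓝 0) := by
    have h1 : Tendsto (fun s => f s - f s₀) (𝓝[Set.Icc 0 t] s₀) (𝓝 0) := by
      have h0 : ContinuousWithinAt (fun _ : ℝ => f s₀) (Set.Icc 0 t) s₀ :=
        continuousWithinAt_const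
      have := hfc.sub h0
      simpa [Pi.sub_def] using this.tendsto
    have h2 := (hpc.tendsto 0).comp h1
    rw [map_zero] at h2
    simpa using (tendsto_const_nhds (x := C)).mul h2
  -- second piece
  have hB : Tendsto (fun s => q (T (t - s) (f s₀) - T (t - s₀) (f s₀)))
      (𝓝[Set.Icc 0 t] s₀) (𝓝 0) := by
    have hGcont : ContinuousOn (fun τ => T τ (f s₀)) (Set.Ici (0:ℝ)) := hcont (f s₀)
    have hbase : Tendsto (fun s : ℝ => t - s) (𝓝[Set.Icc 0 t] s₀) (𝓝 (t - s₀)) :=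
      ((continuous_const.sub continuous_id).tendsto s₀).mono_left nhdsWithin_le_nhds
    have hsub : Tendsto (fun s : ℝ => t - s) (𝓝[Set.Icc 0 t] s₀) (𝓝[Set.Ici 0] (t - s₀)) := by
      apply tendsto_nhdsWithin_of_tendsto_nhds_of_eventually_within _ hbase
      filter_upwards [eventually_mem_nhdsWithin] with s hs
      exact Set.mem_Ici.mpr (by linarith [(Set.mem_Icc.mp hs).2])
    have h1 : Tendsto (fun s => T (t - s) (f s₀)) (𝓝[Set.Icc 0 t] s₀) (𝓝 (T (t - s₀) (f s₀))) :=
      (hGcont (t - s₀) (Set.mem_Ici.mpr (by linarith [(Set.mem_Icc.mp hs₀).2]))).tendsto.comp hsub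
    have h2 : Tendsto (fun s => T (t - s) (f s₀) - T (t - s₀) (f s₀)) (𝓝[Set.Icc 0 t] s₀)
        (𝓝 0) := by
      simpa using h1.sub (tendsto_const_nhds (x := T (t - s₀) (f s₀)))
    have h3 := (hq.tendsto 0).comp h2
    rw [map_zero] at h3
    exact h3
  -- squeeze
  have hbound : ∀ᶠ s in 𝓝[Set.Icc 0 t] s₀,
      q (T (t - s) (f s) - T (t - s₀) (f s₀))
        ≤ C * p (f s - f s₀) + q (T (t - s) (f s₀) - T (t - s₀) (f s₀)) := by
    filter_upwards [eventually_mem_nhdsWithin] with s hs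
    have hdecomp : T (t - s) (f s) - T (t - s₀) (f s₀)
        = T (t - s) (f s - f s₀) + (T (t - s) (f s₀) - T (t - s₀) (f s₀)) := by
      rw [map_sub]; abel
    rw [hdecomp]
    refine le_trans (map_add_le_add q _ _) (add_le_add ?_ le_rfl)
    refine hCp (t - s) ?_ _
    rcases Set.mem_Icc.mp hs with ⟨hs1, hs2⟩
    exact Set.mem_Icc.mpr ⟨by linarith, by linarith⟩
  have hup : Tendsto (fun s => C * p (f s - f s₀)
      + q (T (t - s) (f s₀) - T (t - s₀) (f s₀))) (𝓝[Set.Icc 0 t] s₀) (𝓝 0) := by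
    simpa using hA.add hB
  exact squeeze_zero' (Filter.Eventually.of_forall (fun s => apply_nonneg q _)) hbound hup

end Semigroup

section MainDev
variable {X U : Type*} [AddCommGroup X] [Module ℝ X] [UniformSpace X] [IsUniformAddGroup X]
  [ContinuousSMul ℝ X] [LocallyConvexSpace ℝ X] [T2Space X]
  [AddCommGroup U] [Module ℝ U] [UniformSpace U] [IsUniformAddGroup U]
  [ContinuousSMul ℝ U] [LocallyConvexSpace ℝ U] [T2Space U]
variable {T : ℝ → X →L[ℝ] X}

lemma riemannIntegral_congr {F G : ℝ → X} {a b : ℝ} (h : ∀ s ∈ Set.Icc a b, F s = G s) :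
    riemannIntegral F a b = riemannIntegral G a b := by
  have hiff : ∀ y : X, IsRiemannIntegral F a b y ↔ IsRiemannIntegral G a b y := fun y =>
    ⟨isRiemannIntegral_congr h, isRiemannIntegral_congr (fun s hs => (h s hs).symm)⟩
  have hpred : IsRiemannIntegral F a b = IsRiemannIntegral G a b :=
    funext fun y => propext (hiff y)
  unfold riemannIntegral
  rw [hpred]

lemma sgConv_isRI (hX : SequentiallyComplete X) (hT : IsSCLESemigroup T) {f : ℝ → X} {R t : ℝ}
    (ht0 : 0 ≤ t) (htR : t ≤ R) (hf : ContinuousOn f (Set.Icc 0 R)) :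
    IsRiemannIntegral (fun s => T (t - s) (f s)) 0 t (sgConv T f t) := by
  obtain ⟨y, hy⟩ := isRiemannIntegral_exists ht0
    (sgConv_integrand_continuousOn hT ht0 htR hf) hX
  have hval : sgConv T f t = y := riemannIntegral_eq ht0 hy
  rw [hval]
  exact hy

lemma sgConv_zero {f : ℝ → X} : sgConv T f 0 = 0 :=
  riemannIntegral_eq le_rfl isRiemannIntegral_refl

lemma sgConv_split (hX : SequentiallyComplete X) (hT : IsSCLESemigroup T) {f : ℝ → X}
    {ρ t : ℝ} (hρ : 0 < ρ) (hρt : ρ ≤ t) (ht : t ≤ 2*ρ)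
    (hf : ContinuousOn f (Set.Icc 0 (2*ρ))) :
    sgConv T f t = T (t - ρ) (sgConv T f ρ) + sgConv T (fun σ => f (σ + ρ)) (t - ρ) := by
  have hgc : ContinuousOn (fun σ => f (σ + ρ)) (Set.Icc 0 ρ) := by
    refine hf.comp (continuous_id.add continuous_const).continuousOn fun σ hσ => ?_
    exact Set.mem_Icc.mpr ⟨by linarith [(Set.mem_Icc.mp hσ).1], by linarith [(Set.mem_Icc.mp hσ).2]⟩
  rcases eq_or_lt_of_le hρt with heq | hlt
  · rw [← heq, sub_self, hT.1, sgConv_zero]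
    simp
  · have ht0 : (0:ℝ) ≤ t := by linarith
    have hI3 : IsRiemannIntegral (fun s => T (t - s) (f s)) 0 t (sgConv T f t) :=
      sgConv_isRI hX hT ht0 ht hf
    have hIρ : IsRiemannIntegral (fun s => T (ρ - s) (f s)) 0 ρ (sgConv T f ρ) :=
      sgConv_isRI hX hT hρ.le (by linarith) hf
    have hI1 : IsRiemannIntegral (fun s => T (t - s) (f s)) 0 ρ (T (t - ρ) (sgConv T f ρ)) := by
      refine isRiemannIntegral_congr ?_ (hIρ.clm_comp (T (t - ρ)))
      intro s hs
      have hcomp := hT.2.1 (t - ρ) (ρ - s) (by linarith) (by linarith [(Set.mem_Icc.mp hs).2])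
      have e : (t - ρ) + (ρ - s) = t - s := by ring
      rw [e] at hcomp
      show T (t - ρ) (T (ρ - s) (f s)) = T (t - s) (f s)
      rw [hcomp]
      rfl
    have hI2' : IsRiemannIntegral (fun σ => T ((t - ρ) - σ) (f (σ + ρ))) 0 (t - ρ)
        (sgConv T (fun σ => f (σ + ρ)) (t - ρ)) :=
      sgConv_isRI hX hT (by linarith) (by linarith : t - ρ ≤ ρ) hgc
    have hI2'' : IsRiemannIntegral (fun σ => T (t - (σ + ρ)) (f (σ + ρ))) 0 (t - ρ)
        (sgConv T (fun σ => f (σ + ρ)) (t - ρ)) := by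
      refine isRiemannIntegral_congr ?_ hI2'
      intro σ hσ
      have e : (t - ρ) - σ = t - (σ + ρ) := by ring
      rw [e]
    have hI2 := IsRiemannIntegral.translate (F := fun s => T (t - s) (f s)) (r := ρ) hI2''
    rw [zero_add, sub_add_cancel] at hI2
    exact isRiemannIntegral_concat_eq hρ hlt hI1 hI2 hI3

lemma cmaxreg_step (hX : SequentiallyComplete X) (hT : IsSCLESemigroup T) (B : U →L[ℝ] X)
    {ρ : ℝ} (hρ : 0 < ρ) (h : CMaxReg T B ρ) : CMaxReg T B (2*ρ) := by
  intro f hf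
  have hBf : ContinuousOn (fun s => B (f s)) (Set.Icc 0 (2*ρ)) :=
    B.continuous.comp_continuousOn hf
  have hf1 : ContinuousOn f (Set.Icc 0 ρ) := hf.mono (Set.Icc_subset_Icc le_rfl (by linarith))
  obtain ⟨hmem1, hcont1⟩ := h f hf1
  have hgc : ContinuousOn (fun σ => f (σ + ρ)) (Set.Icc 0 ρ) := by
    refine hf.comp (continuous_id.add continuous_const).continuousOn fun σ hσ => ?_
    exact Set.mem_Icc.mpr ⟨by linarith [(Set.mem_Icc.mp hσ).1], by linarith [(Set.mem_Icc.mp hσ).2]⟩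
  obtain ⟨hmem2, hcont2⟩ := h (fun σ => f (σ + ρ)) hgc
  have hX₁dom : sgConv T (fun s => B (f s)) ρ ∈ genDomain T := hmem1 ρ ⟨hρ.le, le_rfl⟩
  have hsplitAll : ∀ t ∈ Set.Icc ρ (2*ρ), sgConv T (fun s => B (f s)) t
      = T (t - ρ) (sgConv T (fun s => B (f s)) ρ)
        + sgConv T (fun σ => B (f (σ + ρ))) (t - ρ) := by
    intro t htm
    exact sgConv_split hX hT hρ htm.1 htm.2 hBf
  have hmem : ∀ t ∈ Set.Icc (0:ℝ) (2*ρ), sgConv T (fun s => B (f s)) t ∈ genDomain T := by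
    intro t htm
    rcases le_total t ρ with hle | hge
    · exact hmem1 t ⟨htm.1, hle⟩
    · rw [hsplitAll t ⟨hge, htm.2⟩]
      exact (genDomain_add (genDomain_T_smulmap hT (τ := t - ρ) (by linarith) hX₁dom).1
        (hmem2 (t - ρ) ⟨by linarith, by linarith [htm.2]⟩)).1
  refine ⟨hmem, ?_⟩
  have hIcc : Set.Icc (0:ℝ) (2*ρ) = Set.Icc 0 ρ ∪ Set.Icc ρ (2*ρ) :=
    (Set.Icc_union_Icc_eq_Icc hρ.le (by linarith)).symm
  rw [hIcc]
  refine ContinuousOn.paste isClosed_Icc isClosed_Icc hcont1 ?_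
  have hformula : ∀ t ∈ Set.Icc ρ (2*ρ), generator T (sgConv T (fun s => B (f s)) t)
      = T (t - ρ) (generator T (sgConv T (fun s => B (f s)) ρ))
        + generator T (sgConv T (fun σ => B (f (σ + ρ))) (t - ρ)) := by
    intro t htm
    rw [hsplitAll t htm]
    have h1 := genDomain_T_smulmap hT (τ := t - ρ) (by linarith [htm.1]) hX₁dom
    have h2 := hmem2 (t - ρ) ⟨by linarith [htm.1], by linarith [htm.2]⟩
    rw [(genDomain_add h1.1 h2).2, h1.2]
  refine ContinuousOn.congr ?_ hformula
  have hpart1 : ContinuousOn (fun t => T (t - ρ)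
      (generator T (sgConv T (fun s => B (f s)) ρ))) (Set.Icc ρ (2*ρ)) := by
    refine (hT.2.2.1 _).comp ((continuous_id.sub continuous_const).continuousOn) fun t htm => ?_
    exact Set.mem_Ici.mpr (by linarith [(Set.mem_Icc.mp htm).1])
  have hpart2 : ContinuousOn (fun t =>
      generator T (sgConv T (fun σ => B (f (σ + ρ))) (t - ρ))) (Set.Icc ρ (2*ρ)) := by
    refine hcont2.comp ((continuous_id.sub continuous_const).continuousOn) fun t htm => ?_
    exact Set.mem_Icc.mpr ⟨by linarith [(Set.mem_Icc.mp htm).1], by linarith [(Set.mem_Icc.mp htm).2]⟩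
  exact hpart1.add hpart2

lemma cmaxreg_mono (B : U →L[ℝ] X) {r₁ r₂ : ℝ} (h0 : 0 ≤ r₁) (h12 : r₁ ≤ r₂)
    (h : CMaxReg T B r₂) : CMaxReg T B r₁ := by
  intro f hf
  have hf'c : ContinuousOn (fun s => f (min s r₁)) (Set.Icc 0 r₂) := by
    refine hf.comp ((continuous_id.min continuous_const).continuousOn) fun s hs => ?_
    exact Set.mem_Icc.mpr ⟨le_min (Set.mem_Icc.mp hs).1 h0, min_le_right _ _⟩
  obtain ⟨hmem, hcont⟩ := h (fun s => f (min s r₁)) hf'c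
  have heq : ∀ t ∈ Set.Icc (0:ℝ) r₁, sgConv T (fun s => B (f (min s r₁))) t
      = sgConv T (fun s => B (f s)) t := by
    intro t htm
    refine riemannIntegral_congr fun s hs => ?_
    have hmin : min s r₁ = s := min_eq_left (le_trans (Set.mem_Icc.mp hs).2 htm.2)
    show T (t - s) (B (f (min s r₁))) = T (t - s) (B (f s))
    rw [hmin]
  refine ⟨fun t htm => ?_, ?_⟩
  · rw [← heq t htm]
    exact hmem t ⟨htm.1, le_trans htm.2 h12⟩
  · refine ContinuousOn.congr (hcont.mono (Set.Icc_subset_Icc le_rfl h12)) ?_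
    intro t htm
    show generator T (sgConv T (fun s => B (f s)) t)
      = generator T (sgConv T (fun s => B (f (min s r₁))) t)
    rw [heq t htm]

end MainDev

end MyDev

theorem stmt11 {X U : Type*} [AddCommGroup X] [Module ℝ X] [UniformSpace X] [IsUniformAddGroup X]
    [ContinuousSMul ℝ X] [LocallyConvexSpace ℝ X] [T2Space X]
    [AddCommGroup U] [Module ℝ U] [UniformSpace U] [IsUniformAddGroup U]
    [ContinuousSMul ℝ U] [LocallyConvexSpace ℝ U] [T2Space U]
    (hX : SequentiallyComplete X)
    (T : ℝ → X →L[ℝ] X) (hT : IsSCLESemigroup T)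
    (B : U →L[ℝ] X)
    (r : ℝ) (hr : 0 < r) (hmr : CMaxReg T B r) :
    ∀ r' : ℝ, 0 < r' → CMaxReg T B r' := by
  intro r' hr'
  have hstep : ∀ k : ℕ, CMaxReg T B (2^k * r) := by
    intro k
    induction k with
    | zero => simpa using hmr
    | succ n ih =>
      have hpos : (0:ℝ) < 2^n * r := by positivity
      have := cmaxreg_step hX hT B hpos ih
      have e : 2 * (2^n * r) = 2^(n+1) * r := by ring
      rwa [e] at this
  obtain ⟨k, hk⟩ := pow_unbounded_of_one_lt (r'/r) (one_lt_two (α := ℝ))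
  have hr'le : r' ≤ 2^k * r := by
    rw [div_lt_iff₀ hr] at hk
    linarith
  exact cmaxreg_mono B hr'.le hr'le (hstep k)
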